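/- arXiv:math/9209207 — 2 statements merged into one kernel-verified Lean document; each statement's English description precedes it below -/
import Mathlib

section
/- If κ is a regular cardinal with 2^{<κ} > κ, then for every cardinal θ ≥ κ the Baire number 𝔫_κ^θ of the space (2^θ)_κ equals κ⁺. -/
open Cardinal Set

universe u

/-- `ExtFn q p` : the partial function `q` extends `p`. -/
def ExtFn {θ : Type u} (q p : θ → Option Bool) : Prop :=
  ∀ x b, p x = some b → q x = some b

/-- `Fn κ θ` : partial functions `θ → 2` of size `< κ`. -/
def Fn (κ : Cardinal.{u}) (θ : Type u) : Set (θ → Option Bool) :=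
  {p | #{x | p x ≠ none} < κ}

/-- The basic open set determined by a condition `p`. -/
def cylinder {θ : Type u} (p : θ → Option Bool) : Set (θ → Bool) :=
  {f | ∀ x b, p x = some b → f x = b}

/-- The topology of the space `(2^θ)_κ`. -/
def kTop (κ : Cardinal.{u}) (θ : Type u) : TopologicalSpace (θ → Bool) :=
  TopologicalSpace.generateFrom {U | ∃ p ∈ Fn κ θ, U = cylinder p}

/-- The Baire number of the space `(2^θ)_κ` : the least cardinality of a family of
dense open sets with empty intersection. -/
noncomputable def spaceBaire (κ : Cardinal.{u}) (θ : Type u) : Cardinal.{u} :=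
  sInf {c | ∃ F : Set (Set (θ → Bool)), #F = c ∧
    (∀ U ∈ F, @IsOpen _ (kTop κ θ) U ∧ @Dense _ (kTop κ θ) U) ∧ ⋂₀ F = ∅}

/-- `𝔫_κ^θ` for cardinals `κ ≤ θ`. -/
noncomputable def nBaire (κ θ : Cardinal.{u}) : Cardinal.{u} :=
  spaceBaire κ θ.out

section Helpers

variable {κ : Cardinal.{u}} {T : Type u}

theorem cylinder_anti {q p : T → Option Bool} (h : ExtFn q p) : cylinder q ⊆ cylinder p :=
  fun f hf x b hb => hf x b (h x b hb)

theorem totalize_mem (p : T → Option Bool) : (fun x => (p x).getD false) ∈ cylinder p := by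
  intro x b hb; simp [hb]

theorem cylinder_isOpen (hp : p ∈ Fn κ T) : @IsOpen _ (kTop κ T) (cylinder p) :=
  TopologicalSpace.GenerateOpen.basic _ ⟨p, hp, rfl⟩

theorem exists_cylinder (hκ : ℵ₀ ≤ κ) {U : Set (T → Bool)}
    (hU : @IsOpen _ (kTop κ T) U) :
    ∀ f ∈ U, ∃ p ∈ Fn κ T, f ∈ cylinder p ∧ cylinder p ⊆ U := by
  classical
  have hU' : TopologicalSpace.GenerateOpen {V | ∃ p ∈ Fn κ T, V = cylinder p} U := hU
  clear hU
  induction hU' with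
  | basic V hV =>
    obtain ⟨p, hp, rfl⟩ := hV
    exact fun f hf => ⟨p, hp, hf, subset_rfl⟩
  | univ =>
    intro f _
    refine ⟨fun _ => none, ?_, ?_, subset_univ _⟩
    · have : {x : T | (fun _ => (none : Option Bool)) x ≠ none} = ∅ := by
        ext x; simp
      simp only [Fn, mem_setOf_eq, this, mk_emptyCollection]
      exact lt_of_lt_of_le aleph0_pos hκ
    · intro x b hb; simp at hb
  | inter V W hV hW ihV ihW =>
    rintro f ⟨hfV, hfW⟩
    obtain ⟨p, hp, hfp, hpV⟩ := ihV f hfV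
    obtain ⟨q, hq, hfq, hqW⟩ := ihW f hfW
    refine ⟨fun x => if p x = none then q x else p x, ?_, ?_, ?_⟩
    · have hsub : {x | (if p x = none then q x else p x) ≠ none} ⊆
          {x | p x ≠ none} ∪ {x | q x ≠ none} := by
        intro x hx
        simp only [mem_setOf_eq] at hx ⊢
        by_cases h : p x = none
        · right; simpa [h] using hx
        · left; exact h
      exact lt_of_le_of_lt ((mk_le_mk_of_subset hsub).trans (mk_union_le _ _))
        (add_lt_of_lt hκ hp hq)
    · intro x b hb
      have hb2 : (if p x = none then q x else p x) = some b := hb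
      by_cases h : p x = none
      · rw [if_pos h] at hb2; exact hfq x b hb2
      · rw [if_neg h] at hb2; exact hfp x b hb2
    · intro g hg
      refine ⟨hpV ?_, hqW ?_⟩
      · intro x b hb
        exact hg x b (show (if p x = none then q x else p x) = some b by
          rw [if_neg (by simp [hb])]; exact hb)
      · intro x b hb
        by_cases h : p x = none
        · exact hg x b (show (if p x = none then q x else p x) = some b by
            rw [if_pos h]; exact hb)
        · obtain ⟨b', hb'⟩ := Option.ne_none_iff_exists'.mp h
          have h1 : f x = b' := hfp x b' hb'
          have h2 : f x = b := hfq x b hb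
          have hbb : b' = b := by rw [← h1, h2]
          exact hbb ▸ hg x b' (show (if p x = none then q x else p x) = some b' by
            rw [if_neg h]; exact hb')
  | sUnion S hS ih =>
    rintro f ⟨V, hVS, hfV⟩
    obtain ⟨p, hp, hfp, hpV⟩ := ih V hVS f hfV
    exact ⟨p, hp, hfp, hpV.trans (subset_sUnion_of_mem hVS)⟩

theorem forcing_density (hκ : ℵ₀ ≤ κ) {D : Set (T → Bool)}
    (hO : @IsOpen _ (kTop κ T) D) (hD : @Dense _ (kTop κ T) D)
    {p : T → Option Bool} (hp : p ∈ Fn κ T) :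
    ∃ q ∈ Fn κ T, ExtFn q p ∧ cylinder q ⊆ D := by
  classical
  letI := kTop κ T
  have hopen : IsOpen (cylinder p) := cylinder_isOpen hp
  have hne : (cylinder p).Nonempty := ⟨_, totalize_mem p⟩
  obtain ⟨f, hfp, hfD⟩ := Dense.inter_open_nonempty hD _ hopen hne
  obtain ⟨q₀, hq₀, hfq₀, hq₀D⟩ := exists_cylinder hκ hO f hfD
  refine ⟨fun x => if p x = none ∧ q₀ x = none then none else some (f x), ?_, ?_, ?_⟩
  · have hsub : {x | (if p x = none ∧ q₀ x = none then none else some (f x)) ≠ none} ⊆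
        {x | p x ≠ none} ∪ {x | q₀ x ≠ none} := by
      intro x hx
      by_cases h1 : p x = none
      · by_cases h2 : q₀ x = none
        · exact absurd (if_pos ⟨h1, h2⟩) hx
        · exact Or.inr h2
      · exact Or.inl h1
    exact lt_of_le_of_lt ((mk_le_mk_of_subset hsub).trans (mk_union_le _ _))
      (add_lt_of_lt hκ hp hq₀)
  · intro x b hb
    show (if p x = none ∧ q₀ x = none then none else some (f x)) = some b
    rw [if_neg (by simp [hb]), hfp x b hb]
  · intro g hg
    apply hq₀D
    intro x b hb
    have : f x = b := hfq₀ x b hb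
    rw [← this]
    exact hg x (f x) (show (if p x = none ∧ q₀ x = none then none else some (f x)) = some (f x) by
      rw [if_neg (by simp [hb])])

theorem mk_iUnion_lt_of_isRegular (hκ : κ.IsRegular) {ι : Type u} {s : ι → Set T}
    (hι : #ι < κ) (hs : ∀ i, #(s i) < κ) : #(⋃ i, s i) < κ :=
  lt_of_le_of_lt (mk_iUnion_le s)
    (mul_lt_of_lt hκ.aleph0_le hι (iSup_lt_of_isRegular hκ hι hs))



open scoped Classical in
/-- One step of the transfinite construction. -/
noncomputable def chainStep (κ : Cardinal.{u}) (T : Type u) {ι : Type u} [LT ι]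
    (Dfam : ι → Set (T → Bool)) (α : ι) (prev : ∀ β, β < α → (T → Option Bool)) :
    T → Option Bool :=
  if h : ∃ q, q ∈ Fn κ T ∧ (∀ β (hβ : β < α), ExtFn q (prev β hβ)) ∧ cylinder q ⊆ Dfam α
  then h.choose else fun _ => none

/-- The transfinite chain of conditions. -/
noncomputable def chain (κ : Cardinal.{u}) (T : Type u) {ι : Type u} [LT ι] [WellFoundedLT ι]
    (Dfam : ι → Set (T → Bool)) : ι → (T → Option Bool) :=
  WellFoundedLT.fix (chainStep κ T Dfam)

theorem chain_eq (κ : Cardinal.{u}) (T : Type u) {ι : Type u} [LT ι] [WellFoundedLT ι]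
    (Dfam : ι → Set (T → Bool)) (α : ι) :
    chain κ T Dfam α = chainStep κ T Dfam α (fun β _ => chain κ T Dfam β) :=
  WellFoundedLT.fix_eq (chainStep κ T Dfam) α

theorem inter_nonempty {κ : Cardinal.{u}} {T : Type u} (hκ : κ.IsRegular)
    (F : Set (Set (T → Bool)))
    (hF : ∀ U ∈ F, @IsOpen _ (kTop κ T) U ∧ @Dense _ (kTop κ T) U)
    (hcard : #F ≤ κ) : (⋂₀ F).Nonempty := by
  classical
  rcases F.eq_empty_or_nonempty with rfl | hne
  · exact ⟨fun _ => false, by simp⟩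
  haveI hneF : Nonempty ↥F := hne.to_subtype
  have hmkι : #κ.ord.ToType = κ := Cardinal.mk_ord_toType κ
  haveI hneι : Nonempty κ.ord.ToType := Ordinal.toType_nonempty_iff_ne_zero.mpr (by
    intro h0
    have h1 : κ = 0 := by rw [← card_ord κ, h0, Ordinal.card_zero]
    exact (aleph0_pos.trans_le hκ.aleph0_le).ne' h1)
  obtain ⟨emb⟩ := (le_def ↥F κ.ord.ToType).mp (by rw [hmkι]; exact hcard)
  set e : κ.ord.ToType → ↥F := Function.invFun emb with hedef
  have he : Function.Surjective e := Function.invFun_surjective emb.injective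
  set Dfam : κ.ord.ToType → Set (T → Bool) := fun α => ↑(e α) with hDdef
  set p : κ.ord.ToType → (T → Option Bool) := chain κ T Dfam with hpdef
  have key : ∀ α, p α ∈ Fn κ T ∧ (∀ β, β < α → ExtFn (p α) (p β)) ∧
      cylinder (p α) ⊆ Dfam α := by
    intro α
    refine WellFoundedLT.induction
      (motive := fun α => p α ∈ Fn κ T ∧ (∀ β, β < α → ExtFn (p α) (p β)) ∧
        cylinder (p α) ⊆ Dfam α) α ?_
    intro α ih
    have hex : ∃ q, q ∈ Fn κ T ∧
        (∀ β (hβ : β < α), ExtFn q ((fun β (_ : β < α) => p β) β hβ)) ∧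
        cylinder q ⊆ Dfam α := by
      set u : T → Option Bool :=
        fun x => if hx : ∃ β, β < α ∧ p β x ≠ none then p hx.choose x else none with hu
      have hext : ∀ β, β < α → ExtFn u (p β) := by
        intro β hβ x b hb
        have hx : ∃ β', β' < α ∧ p β' x ≠ none := ⟨β, hβ, by simp [hb]⟩
        have h1 : u x = p hx.choose x := by rw [hu]; exact dif_pos hx
        obtain ⟨hlt, hnn⟩ := hx.choose_spec
        rcases lt_trichotomy hx.choose β with hc | hc | hc
        · obtain ⟨b', hb'⟩ := Option.ne_none_iff_exists'.mp hnn
          have h2 : p β x = some b' := (ih β hβ).2.1 _ hc x b' hb'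
          rw [hb] at h2
          rw [h1, hb', Option.some_inj.mp h2]
        · rw [h1, hc]; exact hb
        · have h2 : p hx.choose x = some b := (ih _ hlt).2.1 β hc x b hb
          rw [h1, h2]
      have hufn : u ∈ Fn κ T := by
        have hsub : {x | u x ≠ none} ⊆ ⋃ β : ↥(Iio α), {x | p β.1 x ≠ none} := by
          intro x hx
          have hx' : ∃ β, β < α ∧ p β x ≠ none := by
            by_contra hc
            exact hx (show u x = none by rw [hu]; exact dif_neg hc)
          exact mem_iUnion.mpr ⟨⟨hx'.choose, hx'.choose_spec.1⟩, hx'.choose_spec.2⟩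
        exact lt_of_le_of_lt (mk_le_mk_of_subset hsub)
          (mk_iUnion_lt_of_isRegular hκ (Cardinal.mk_Iio_toType_ord_lt α)
            (fun β => (ih β.1 β.2).1))
      obtain ⟨hOe, hDe⟩ := hF (e α) (e α).2
      obtain ⟨q, hq, hqu, hqD⟩ := forcing_density hκ.aleph0_le hOe hDe hufn
      exact ⟨q, hq, fun β hβ x b hb => hqu x b (hext β hβ x b hb), hqD⟩
    have hpα : p α = chainStep κ T Dfam α (fun β _ => p β) := chain_eq κ T Dfam α
    rw [hpα]
    simp only [chainStep]
    rw [dif_pos hex]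
    obtain ⟨h1, h2, h3⟩ := hex.choose_spec
    exact ⟨h1, fun β hβ => h2 β hβ, h3⟩
  refine ⟨fun x => if hx : ∃ α, p α x ≠ none then (p hx.choose x).getD false else false, ?_⟩
  intro D hD
  obtain ⟨α, hα⟩ := he ⟨D, hD⟩
  have hsub := (key α).2.2
  have hDα : Dfam α = D := by rw [hDdef]; simp only; rw [hα]
  rw [hDα] at hsub
  apply hsub
  intro x b hb
  have hx : ∃ α', p α' x ≠ none := ⟨α, by simp [hb]⟩
  show (if hx : ∃ α', p α' x ≠ none then (p hx.choose x).getD false else false) = b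
  rw [dif_pos hx]
  obtain ⟨b₀, hb₀⟩ := Option.ne_none_iff_exists'.mp hx.choose_spec
  have hfinal : p hx.choose x = some b := by
    rcases lt_trichotomy hx.choose α with hc | hc | hc
    · have h2 : p α x = some b₀ := (key α).2.1 _ hc x b₀ hb₀
      rw [hb] at h2
      rw [hb₀, Option.some_inj.mp h2]
    · rw [hc]; exact hb
    · exact (key _).2.1 α hc x b hb
  rw [hfinal]; rfl
theorem exists_family {κ : Cardinal.{u}} {T : Type u} (hκ : κ.IsRegular)
    (h : κ < (2 : Cardinal.{u}) ^< κ) (hT : κ ≤ #T) :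
    ∃ F : Set (Set (T → Bool)), #F = Order.succ κ ∧
      (∀ U ∈ F, @IsOpen _ (kTop κ T) U ∧ @Dense _ (kTop κ T) U) ∧ ⋂₀ F = ∅ := by
  classical
  obtain ⟨μ, hμκ, hκμ⟩ : ∃ μ, μ < κ ∧ κ < 2 ^ μ := by
    by_contra hc
    push_neg at hc
    exact absurd (powerlt_le.mpr fun x hx => hc x hx) h.not_ge
  have hμinf : ℵ₀ ≤ μ := by
    by_contra hfin
    push_neg at hfin
    have h2 : (2 : Cardinal) < ℵ₀ := lt_aleph0.mpr ⟨2, by norm_num⟩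
    exact absurd ((power_lt_aleph0 h2 hfin).trans_le hκ.aleph0_le) hκμ.asymm
  haveI hKne : Nonempty κ.out := mk_ne_zero_iff.mp
    (by rw [mk_out]; exact (aleph0_pos.trans_le hκ.aleph0_le).ne')
  have hprod : #(κ.out × μ.out) ≤ #T := by
    rw [mk_prod, lift_id, lift_id, mk_out, mk_out,
      mul_eq_max hκ.aleph0_le hμinf, max_eq_left hμκ.le]
    exact hT
  obtain ⟨B⟩ := (le_def (κ.out × μ.out) T).mp hprod
  have hZle : #(Order.succ κ).out ≤ #(μ.out → Bool) := by
    have harrow : #(μ.out → Bool) = 2 ^ μ := by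
      rw [mk_arrow, mk_out]
      simp
    rw [mk_out, harrow]
    exact Order.succ_le_of_lt hκμ
  obtain ⟨Z⟩ := (le_def (Order.succ κ).out (μ.out → Bool)).mp hZle
  have hchoose : ∀ (α : κ.out) (m : μ.out) (hx : ∃ m', B (α, m) = B (α, m')),
      hx.choose = m := by
    intro α m hx
    have h2 := B.injective hx.choose_spec
    exact (congrArg Prod.snd h2).symm
  set pc : (Order.succ κ).out → κ.out → (T → Option Bool) := fun i α x =>
    if hx : ∃ m, x = B (α, m) then some (Z i hx.choose) else none with hpc
  have hcyl : ∀ i α f, f ∈ cylinder (pc i α) ↔ ∀ m, f (B (α, m)) = Z i m := by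
    intro i α f
    constructor
    · intro hf m
      have hx : ∃ m', B (α, m) = B (α, m') := ⟨m, rfl⟩
      have := hf (B (α, m)) (Z i hx.choose) (dif_pos hx)
      rwa [hchoose α m hx] at this
    · intro hf x b hb
      have hb' : (if hx : ∃ m, x = B (α, m) then some (Z i hx.choose) else none) = some b := hb
      by_cases hx : ∃ m, x = B (α, m)
      · rw [dif_pos hx] at hb'
        rw [hx.choose_spec, hf hx.choose]
        exact Option.some_inj.mp hb'
      · rw [dif_neg hx] at hb'
        exact absurd hb' (by simp)
  have hpcFn : ∀ i α, pc i α ∈ Fn κ T := by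
    intro i α
    have hsub : {x | pc i α x ≠ none} ⊆ range (fun m : μ.out => B (α, m)) := by
      intro x hx
      by_contra hc
      have hx' : ¬ ∃ m, x = B (α, m) := fun ⟨m, hm⟩ => hc ⟨m, hm.symm⟩
      exact hx (dif_neg hx')
    calc #{x | pc i α x ≠ none} ≤ #(range fun m : μ.out => B (α, m)) :=
          mk_le_mk_of_subset hsub
      _ ≤ #μ.out := mk_range_le
      _ < κ := by rw [mk_out]; exact hμκ
  set D : (Order.succ κ).out → Set (T → Bool) :=
    fun i => {f | ∃ α : κ.out, ∀ m : μ.out, f (B (α, m)) = Z i m} with hD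
  have hDopen : ∀ i, @IsOpen _ (kTop κ T) (D i) := by
    intro i
    have heq : D i = ⋃ α : κ.out, cylinder (pc i α) := by
      ext f
      simp only [hD, mem_setOf_eq, mem_iUnion]
      exact ⟨fun ⟨α, hα⟩ => ⟨α, (hcyl i α f).mpr hα⟩,
        fun ⟨α, hα⟩ => ⟨α, (hcyl i α f).mp hα⟩⟩
    rw [heq]
    letI := kTop κ T
    exact isOpen_iUnion fun α => cylinder_isOpen (hpcFn i α)
  have hDdense : ∀ i, @Dense _ (kTop κ T) (D i) := by
    intro i
    letI := kTop κ T
    rw [dense_iff_inter_open]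
    rintro U hU ⟨f, hf⟩
    obtain ⟨p, hp, hfp, hpU⟩ := exists_cylinder hκ.aleph0_le hU f hf
    have hS : ∃ α : κ.out, ∀ m : μ.out, p (B (α, m)) = none := by
      by_contra hc
      push_neg at hc
      have hinj : Function.Injective (fun α : κ.out =>
          (⟨B (α, (hc α).choose), (hc α).choose_spec⟩ : {x | p x ≠ none})) := by
        intro α α' hαα'
        have h1 := congrArg Subtype.val hαα'
        have h2 := B.injective h1
        exact congrArg Prod.fst h2
      have hge : κ ≤ #{x | p x ≠ none} := by
        calc κ = #κ.out := (mk_out κ).symm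
          _ ≤ #{x | p x ≠ none} := mk_le_of_injective hinj
      exact absurd hp hge.not_gt
    obtain ⟨α, hα⟩ := hS
    set g : T → Bool := fun x =>
      if hx : ∃ m, x = B (α, m) then Z i hx.choose else (p x).getD false with hg
    refine ⟨g, hpU ?_, ?_⟩
    · intro x b hb
      have hx' : ¬ ∃ m, x = B (α, m) := by
        rintro ⟨m, rfl⟩
        rw [hα m] at hb
        cases hb
      show (if hx : ∃ m, x = B (α, m) then Z i hx.choose else (p x).getD false) = b
      rw [dif_neg hx', hb]
      rfl
    · refine ⟨α, fun m => ?_⟩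
      have hx : ∃ m', B (α, m) = B (α, m') := ⟨m, rfl⟩
      show (if hx : ∃ m', B (α, m) = B (α, m') then Z i hx.choose
        else (p (B (α, m))).getD false) = Z i m
      rw [dif_pos hx, hchoose α m hx]
  refine ⟨range D, ?_, ?_, ?_⟩
  · have hDinj : Function.Injective D := by
      intro i j hij
      set f₀ : T → Bool := fun x =>
        if hx : ∃ am : κ.out × μ.out, x = B am then Z i hx.choose.2 else false with hf₀
      have hblock : ∀ (α : κ.out) (m : μ.out), f₀ (B (α, m)) = Z i m := by
        intro α m
        have hx : ∃ am : κ.out × μ.out, B (α, m) = B am := ⟨(α, m), rfl⟩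
        have h2 := B.injective hx.choose_spec
        show (if hx : ∃ am : κ.out × μ.out, B (α, m) = B am
          then Z i hx.choose.2 else false) = Z i m
        rw [dif_pos hx, ← h2]
      have hfi : f₀ ∈ D i := ⟨Classical.arbitrary κ.out, fun m => hblock _ m⟩
      rw [hij] at hfi
      obtain ⟨α, hα⟩ := hfi
      have hZZ : Z i = Z j := funext fun m => by rw [← hα m, hblock α m]
      exact Z.injective hZZ
    rw [mk_range_eq D hDinj, mk_out]
  · rintro U ⟨i, rfl⟩
    exact ⟨hDopen i, hDdense i⟩
  · rw [eq_empty_iff_forall_notMem]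
    intro f hf
    have hfD : ∀ i, f ∈ D i := fun i => hf (D i) ⟨i, rfl⟩
    have hφinj : Function.Injective (fun i => (hfD i).choose) := by
      intro i j hij
      apply Z.injective
      funext m
      have hi := (hfD i).choose_spec m
      have hj := (hfD j).choose_spec m
      simp only at hij
      rw [← hi, ← hj, hij]
    have hle : Order.succ κ ≤ κ := by
      calc Order.succ κ = #(Order.succ κ).out := (mk_out _).symm
        _ ≤ #κ.out := mk_le_of_injective hφinj
        _ = κ := mk_out κ
    exact absurd hle (Order.lt_succ κ).not_ge

/-- Fact 2: if `2^{<κ} > κ`, then `𝔫_κ^θ = κ⁺` for every `θ ≥ κ`. -/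
theorem baire_eq_succ_of_powerlt (κ : Cardinal.{u}) (hκ : κ.IsRegular)
    (h : κ < (2 : Cardinal.{u}) ^< κ) :
    ∀ θ : Cardinal.{u}, κ ≤ θ → nBaire κ θ = Order.succ κ := by
  intro θ hθ
  have hT : κ ≤ #θ.out := by rw [mk_out]; exact hθ
  obtain ⟨F₀, hc₀, hprop₀, hempty₀⟩ := exists_family hκ h hT
  have hmem : Order.succ κ ∈ {c | ∃ F : Set (Set (θ.out → Bool)), #F = c ∧
      (∀ U ∈ F, @IsOpen _ (kTop κ θ.out) U ∧ @Dense _ (kTop κ θ.out) U) ∧ ⋂₀ F = ∅} :=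
    ⟨F₀, hc₀, hprop₀, hempty₀⟩
  rw [nBaire, spaceBaire]
  refine le_antisymm (csInf_le' hmem) ?_
  refine le_csInf ⟨_, hmem⟩ ?_
  rintro c ⟨F, rfl, hprop, hempty⟩
  by_contra hlt
  push_neg at hlt
  have hle : #F ≤ κ := Order.lt_succ_iff.mp hlt
  have hne := inter_nonempty hκ F hprop hle
  rw [hempty] at hne
  exact hne.ne_empty rfl
end Helpers
end

section
/- For a regular cardinal κ, the set {𝔫_κ^θ : θ ≥ κ a cardinal} of Baire numbers of the spaces (2^θ)_κ is finite. -/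
open Cardinal Set TopologicalSpace
open scoped Classical

universe u

section helpers

variable {κ : Cardinal.{u}} {θ : Type u}

lemma const_none_mem_Fn (hκ : 0 < κ) : (fun _ : θ => (none : Option Bool)) ∈ Fn κ θ := by
  have : {x : θ | (none : Option Bool) ≠ none} = ∅ := by simp
  simp only [Fn, mem_setOf_eq, this, mk_emptyCollection]
  exact hκ

lemma cylinder_const_none : cylinder (fun _ : θ => (none : Option Bool)) = Set.univ := by
  ext f; simp [cylinder]

/-- combine two conditions, preferring the first -/
def combine (p q : θ → Option Bool) : θ → Option Bool :=
  fun x => match p x with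
    | some b => some b
    | none => q x

lemma combine_mem_Fn (hκ : ℵ₀ ≤ κ) (hp : p ∈ Fn κ θ) (hq : q ∈ Fn κ θ) :
    combine p q ∈ Fn κ θ := by
  have hsub : {x : θ | combine p q x ≠ none} ⊆ {x | p x ≠ none} ∪ {x | q x ≠ none} := by
    intro x hx
    simp only [mem_setOf_eq, combine] at hx ⊢
    rcases h : p x with _ | b
    · right; rw [h] at hx; exact hx
    · left; simp [h]
  calc #{x : θ | combine p q x ≠ none} ≤ #({x : θ | p x ≠ none} ∪ {x | q x ≠ none} : Set θ) :=
        mk_le_mk_of_subset hsub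
    _ ≤ #{x : θ | p x ≠ none} + #{x : θ | q x ≠ none} := mk_union_le _ _
    _ < κ := Cardinal.add_lt_of_lt hκ hp hq

lemma nhds_cylinder (hκ : ℵ₀ ≤ κ) {u : Set (θ → Bool)}
    (hu : GenerateOpen {U | ∃ p ∈ Fn κ θ, U = cylinder p} u) :
    ∀ a ∈ u, ∃ p ∈ Fn κ θ, a ∈ cylinder p ∧ cylinder p ⊆ u := by
  induction hu with
  | basic U hU =>
    obtain ⟨p, hp, rfl⟩ := hU
    exact fun a ha => ⟨p, hp, ha, subset_rfl⟩
  | univ =>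
    intro a _
    exact ⟨fun _ => none, const_none_mem_Fn (lt_of_lt_of_le aleph0_pos hκ),
      by rw [cylinder_const_none]; trivial, by rw [cylinder_const_none]⟩
  | inter u v _ _ ihu ihv =>
    intro a ha
    obtain ⟨p, hp, hap, hpu⟩ := ihu a ha.1
    obtain ⟨q, hq, haq, hqv⟩ := ihv a ha.2
    refine ⟨combine p q, combine_mem_Fn hκ hp hq, ?_, ?_⟩
    · intro x b hb
      simp only [combine] at hb
      rcases h : p x with _ | b'
      · rw [h] at hb; exact haq x b hb
      · rw [h] at hb; cases hb; exact hap x b h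
    · intro f hf
      constructor
      · apply hpu
        intro x b hb
        exact hf x b (by simp [combine, hb])
      · apply hqv
        intro x b hb
        rcases h : p x with _ | b'
        · exact hf x b (by simp [combine, h, hb])
        · have h1 : f x = b' := hf x b' (by simp [combine, h])
          have h2 : a x = b' := hap x b' h
          have h3 : a x = b := haq x b hb
          rw [h1, ← h2, h3]
  | sUnion S _ ih =>
    intro a ha
    obtain ⟨t, htS, hat⟩ := ha
    obtain ⟨p, hp, hap, hpt⟩ := ih t htS a hat
    exact ⟨p, hp, hap, hpt.trans (subset_sUnion_of_mem htS)⟩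

lemma isBasis_cylinders (hκ : ℵ₀ ≤ κ) :
    @IsTopologicalBasis (θ → Bool) (kTop κ θ) {U | ∃ p ∈ Fn κ θ, U = cylinder p} := by
  letI := kTop κ θ
  refine isTopologicalBasis_of_isOpen_of_nhds ?_ ?_
  · rintro U hU
    exact TopologicalSpace.GenerateOpen.basic U hU
  · intro a u ha hu
    obtain ⟨p, hp, hap, hpu⟩ := nhds_cylinder hκ hu a ha
    exact ⟨cylinder p, ⟨p, hp, rfl⟩, hap, hpu⟩


/-- condition fixing a single coordinate -/
noncomputable def single (x : θ) (b : Bool) : θ → Option Bool :=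
  fun y => if y = x then some b else none

lemma single_mem_Fn (hκ : ℵ₀ ≤ κ) (x : θ) (b : Bool) : single x b ∈ Fn κ θ := by
  have : {y : θ | single x b y ≠ none} = {x} := by
    ext y; simp only [single, mem_setOf_eq, mem_singleton_iff]
    by_cases h : y = x <;> simp [h]
  simp only [Fn, mem_setOf_eq, this, mk_singleton]
  exact lt_of_lt_of_le one_lt_aleph0 hκ

lemma cylinder_single (x : θ) (b : Bool) : cylinder (single x b) = {g | g x = b} := by
  ext g
  constructor
  · intro hg; exact hg x b (by simp [single])
  · intro hg y b' hb'
    simp only [single] at hb'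
    by_cases h : y = x
    · subst h; simp at hb'; rw [hb'] at hg; exact hg
    · simp [h] at hb'

lemma isClosed_singleton_fn (hκ : ℵ₀ ≤ κ) (f : θ → Bool) :
    @IsClosed (θ → Bool) (kTop κ θ) {f} := by
  letI := kTop κ θ
  have h1 : ({f} : Set (θ → Bool)) = ⋂ x, cylinder (single x (f x)) := by
    ext g
    simp only [mem_singleton_iff, mem_iInter, cylinder_single, mem_setOf_eq]
    constructor
    · rintro rfl x; rfl
    · intro h; funext x; exact h x
  rw [h1]
  refine isClosed_iInter fun x => ?_
  have h2 : (cylinder (single x (f x)))ᶜ = cylinder (single x (!(f x))) := by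
    rw [cylinder_single, cylinder_single]
    ext g
    simp only [mem_compl_iff, mem_setOf_eq]
    cases hg : g x <;> cases hf : f x <;> simp
  rw [← isOpen_compl_iff, h2]
  exact GenerateOpen.basic _ ⟨single x (!(f x)), single_mem_Fn hκ x _, rfl⟩

lemma exists_none (hθ : κ ≤ #θ) {p : θ → Option Bool} (hp : p ∈ Fn κ θ) :
    ∃ x, p x = none := by
  by_contra h
  push_neg at h
  have : {x : θ | p x ≠ none} = Set.univ := eq_univ_of_forall h
  rw [Fn, mem_setOf_eq, this, mk_univ] at hp
  exact absurd hp (not_lt.mpr hθ)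

lemma dense_compl_singleton_fn (hκ : ℵ₀ ≤ κ) (hθ : κ ≤ #θ) (f : θ → Bool) :
    @Dense (θ → Bool) (kTop κ θ) {f}ᶜ := by
  letI := kTop κ θ
  rw [(isBasis_cylinders hκ).dense_iff]
  rintro o ⟨p, hp, rfl⟩ -
  obtain ⟨x₀, hx₀⟩ := exists_none hθ hp
  refine ⟨fun y => if y = x₀ then !(f x₀) else (p y).getD false, ?_, ?_⟩
  · intro y b hb
    have hy : y ≠ x₀ := fun h => by rw [h, hx₀] at hb; simp at hb
    simp [hy, hb]
  · simp only [mem_compl_iff, mem_singleton_iff]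
    intro h
    have := congrFun h x₀
    simp at this

/-- the target set of spaceBaire -/
def baireFam (κ : Cardinal.{u}) (θ : Type u) : Set Cardinal.{u} :=
  {c | ∃ F : Set (Set (θ → Bool)), #F = c ∧
    (∀ U ∈ F, @IsOpen _ (kTop κ θ) U ∧ @Dense _ (kTop κ θ) U) ∧ ⋂₀ F = ∅}

lemma baireFam_nonempty (hκ : ℵ₀ ≤ κ) (hθ : κ ≤ #θ) : (baireFam κ θ).Nonempty := by
  refine ⟨#(range fun f : θ → Bool => ({f}ᶜ : Set (θ → Bool))),
    range fun f => {f}ᶜ, rfl, ?_, ?_⟩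
  · rintro U ⟨f, rfl⟩
    exact ⟨(isClosed_singleton_fn hκ f).isOpen_compl, dense_compl_singleton_fn hκ hθ f⟩
  · ext g
    simp only [sInter_range, mem_iInter, mem_compl_iff, mem_singleton_iff, mem_empty_iff_false,
      iff_false, not_forall, not_not]
    exact ⟨g, rfl⟩

section proj
variable {θ₁ θ₂ : Type u}

/-- restriction along an embedding -/
def projFn (i : θ₁ ↪ θ₂) : (θ₂ → Bool) → (θ₁ → Bool) := fun f x => f (i x)

/-- transport a condition along an embedding -/
noncomputable def pushCond (i : θ₁ ↪ θ₂) (p : θ₁ → Option Bool) : θ₂ → Option Bool :=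
  fun y => if h : ∃ x, i x = y then p h.choose else none

lemma pushCond_apply (i : θ₁ ↪ θ₂) (p : θ₁ → Option Bool) (x : θ₁) :
    pushCond i p (i x) = p x := by
  have h : ∃ x', i x' = i x := ⟨x, rfl⟩
  have hc : h.choose = x := i.injective h.choose_spec
  simp only [pushCond, dif_pos h, hc]

lemma preimage_cylinder (i : θ₁ ↪ θ₂) (p : θ₁ → Option Bool) :
    projFn i ⁻¹' cylinder p = cylinder (pushCond i p) := by
  ext f
  simp only [mem_preimage, cylinder, mem_setOf_eq, projFn]
  constructor
  · intro hf y b hb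
    simp only [pushCond] at hb
    split_ifs at hb with h
    · obtain hc := h.choose_spec
      rw [← hc]
      exact hf _ b hb
  · intro hf x b hb
    exact hf (i x) b (by rw [pushCond_apply]; exact hb)

lemma pushCond_mem_Fn {κ : Cardinal.{u}} (i : θ₁ ↪ θ₂) {p : θ₁ → Option Bool}
    (hp : p ∈ Fn κ θ₁) : pushCond i p ∈ Fn κ θ₂ := by
  have hsub : {y : θ₂ | pushCond i p y ≠ none} ⊆ i '' {x | p x ≠ none} := by
    intro y hy
    simp only [mem_setOf_eq, pushCond] at hy
    split_ifs at hy with h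
    · exact ⟨h.choose, hy, h.choose_spec⟩
    · exact absurd rfl hy
  calc #{y : θ₂ | pushCond i p y ≠ none} ≤ #(i '' {x | p x ≠ none}) := mk_le_mk_of_subset hsub
    _ ≤ #{x : θ₁ | p x ≠ none} := mk_image_le
    _ < κ := hp

lemma pullCond_mem_Fn {κ : Cardinal.{u}} (i : θ₁ ↪ θ₂) {q : θ₂ → Option Bool}
    (hq : q ∈ Fn κ θ₂) : (fun x => q (i x)) ∈ Fn κ θ₁ := by
  have : #{x : θ₁ | q (i x) ≠ none} ≤ #{y : θ₂ | q y ≠ none} := by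
    refine mk_le_of_injective (f := fun x : {x : θ₁ | q (i x) ≠ none} => (⟨i x, x.2⟩ : {y : θ₂ | q y ≠ none})) ?_
    intro a b hab
    exact Subtype.ext (i.injective (congrArg Subtype.val hab))
  exact lt_of_le_of_lt this hq

lemma image_cylinder (i : θ₁ ↪ θ₂) (q : θ₂ → Option Bool) :
    projFn i '' cylinder q = cylinder (fun x => q (i x)) := by
  ext g
  constructor
  · rintro ⟨f, hf, rfl⟩ x b hb
    exact hf (i x) b hb
  · intro hg
    refine ⟨fun y => if h : ∃ x, i x = y then g h.choose else (q y).getD false, ?_, ?_⟩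
    · intro y b hb
      simp only []
      split_ifs with h
      · have hc := h.choose_spec
        exact hg h.choose b (by simp only []; rw [hc]; exact hb)
      · simp [hb]
    · funext x
      have h : ∃ x', i x' = i x := ⟨x, rfl⟩
      have hc : h.choose = x := i.injective h.choose_spec
      simp only [projFn, dif_pos h, hc]

lemma continuous_projFn {κ : Cardinal.{u}} (i : θ₁ ↪ θ₂) :
    @Continuous _ _ (kTop κ θ₂) (kTop κ θ₁) (projFn i) := by
  letI := kTop κ θ₂
  rw [kTop, kTop, continuous_generateFrom_iff]
  rintro U ⟨p, hp, rfl⟩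
  rw [preimage_cylinder]
  exact GenerateOpen.basic _ ⟨pushCond i p, pushCond_mem_Fn i hp, rfl⟩

lemma isOpenMap_projFn {κ : Cardinal.{u}} (hκ : ℵ₀ ≤ κ) (i : θ₁ ↪ θ₂) :
    @IsOpenMap _ _ (kTop κ θ₂) (kTop κ θ₁) (projFn i) := by
  letI := kTop κ θ₂
  letI := kTop κ θ₁
  rw [(isBasis_cylinders (θ := θ₂) hκ).isOpenMap_iff]
  rintro U ⟨q, hq, rfl⟩
  rw [image_cylinder]
  exact GenerateOpen.basic _ ⟨fun x => q (i x), pullCond_mem_Fn i hq, rfl⟩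

lemma sInf_baireFam_le {κ : Cardinal.{u}} (hκ : ℵ₀ ≤ κ) (hθ₁ : κ ≤ #θ₁) (i : θ₁ ↪ θ₂) :
    sInf (baireFam κ θ₂) ≤ sInf (baireFam κ θ₁) := by
  obtain ⟨F, hF, hmem, hint⟩ := csInf_mem (baireFam_nonempty hκ hθ₁)
  have h2 : #((fun U => projFn i ⁻¹' U) '' F) ∈ baireFam κ θ₂ := by
    refine ⟨_, rfl, ?_, ?_⟩
    · rintro V ⟨U, hU, rfl⟩
      letI := kTop κ θ₂
      letI := kTop κ θ₁
      exact ⟨(hmem U hU).1.preimage (continuous_projFn i),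
        (hmem U hU).2.preimage (isOpenMap_projFn hκ i)⟩
    · rw [sInter_image]
      have : ⋂ U ∈ F, projFn i ⁻¹' U = projFn i ⁻¹' ⋂₀ F := by
        rw [preimage_sInter]
      rw [this, hint, preimage_empty]
  calc sInf (baireFam κ θ₂) ≤ #((fun U => projFn i ⁻¹' U) '' F) := csInf_le' h2
    _ ≤ #F := mk_image_le
    _ = sInf (baireFam κ θ₁) := hF

end proj


lemma spaceBaire_eq_sInf (κ : Cardinal.{u}) (θ : Type u) :
    spaceBaire κ θ = sInf (baireFam κ θ) := rfl

lemma nBaire_antitone {κ : Cardinal.{u}} (hκ : ℵ₀ ≤ κ) {a b : Cardinal.{u}}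
    (ha : κ ≤ a) (hab : a ≤ b) : nBaire κ b ≤ nBaire κ a := by
  have hab' : #a.out ≤ #b.out := by rwa [mk_out, mk_out]
  obtain ⟨i⟩ := (Cardinal.le_def _ _).mp hab'
  have ha' : κ ≤ #a.out := by rwa [mk_out]
  rw [nBaire, nBaire, spaceBaire_eq_sInf, spaceBaire_eq_sInf]
  exact sInf_baireFam_le hκ ha' i

/-- Fact 3 (second part): `{𝔫_κ^θ : θ ≥ κ}` is finite. -/
theorem baire_values_finite (κ : Cardinal.{u}) (hκ : κ.IsRegular) :
    {c : Cardinal.{u} | ∃ θ : Cardinal.{u}, κ ≤ θ ∧ nBaire κ θ = c}.Finite := by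
  set S := {c : Cardinal.{u} | ∃ θ : Cardinal.{u}, κ ≤ θ ∧ nBaire κ θ = c} with hS
  by_contra hfin
  have hinf : S.Infinite := hfin
  let u := hinf.natEmbedding
  have hpwo : S.IsPWO := (((Set.isWF_univ_iff (α := Cardinal.{u})).2 inferInstance).mono (subset_univ _)).isPWO
  obtain ⟨g, hg⟩ := hpwo.exists_monotone_subseq (f := fun n => (u n : Cardinal)) (fun n => (u n).2)
  set c : ℕ → Cardinal.{u} := fun n => (u (g n) : Cardinal) with hc
  have hcinj : Function.Injective c := fun m n h => by
    have := u.injective (Subtype.ext h)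
    exact g.injective this
  have hcs : StrictMono c := hg.strictMono_of_injective hcinj
  have hmem : ∀ n, ∃ θ, κ ≤ θ ∧ nBaire κ θ = c n := fun n => (u (g n)).2
  choose θf h1 h2 using hmem
  have hanti : ∀ m n, m < n → θf n < θf m := by
    intro m n hmn
    by_contra h
    push_neg at h
    have := nBaire_antitone hκ.aleph0_le (h1 m) h
    rw [h2, h2] at this
    exact absurd (hcs hmn) (not_lt.mpr this)
  obtain ⟨x, ⟨n, rfl⟩, hmin⟩ := wellFounded_lt.has_min (Set.range θf) ⟨θf 0, ⟨0, rfl⟩⟩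
  exact hmin (θf (n + 1)) ⟨n + 1, rfl⟩ (hanti n (n + 1) (Nat.lt_succ_self n))
end helpers
end
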